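/- Let H be a graph with maximum degree less than n that has no matching with more than v(M)/2 edges, where M is a maximal matching in H with vertex set of size v(M) < n. Then e(H) ≤ (v(M)/2)·(n + v(M)/4). -/

import Mathlib

open SimpleGraph

lemma aux_meets {V : Type*} [Fintype V] {H : SimpleGraph V} {M : H.Subgraph}
    (hM : M.IsMatching)
    (hmax : ∀ M' : H.Subgraph, M'.IsMatching → M'.verts.ncard ≤ M.verts.ncard)
    {x y : V} (hxy : H.Adj x y) : x ∈ M.verts ∨ y ∈ M.verts := by
  by_contra hc
  push_neg at hc
  obtain ⟨hx, hy⟩ := hc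
  have hd : Disjoint M.support (H.subgraphOfAdj hxy).support := by
    rw [hM.support_eq_verts, SimpleGraph.support_subgraphOfAdj]
    rw [Set.disjoint_right]
    rintro a (rfl | rfl) ha <;> simp_all
  have hM' := hM.sup (Subgraph.IsMatching.subgraphOfAdj hxy) hd
  have hle := hmax _ hM'
  rw [Subgraph.verts_sup, SimpleGraph.subgraphOfAdj_verts] at hle
  rw [Set.ncard_union_eq (by rw [Set.disjoint_right]; rintro a (rfl | rfl) ha <;> simp_all)
    (Set.toFinite _) (Set.toFinite _), Set.ncard_pair hxy.ne] at hle
  omega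

open SimpleGraph

lemma aux_del {V : Type*} {H : SimpleGraph V} {M : H.Subgraph}
    (hM : M.IsMatching) {u v : V} (huv : M.Adj u v) :
    (M.deleteVerts {u, v}).IsMatching := by
  rintro w hw
  rw [Subgraph.deleteVerts_verts] at hw
  obtain ⟨hwv, hwuv⟩ := hw
  simp only [Set.mem_insert_iff, Set.mem_singleton_iff, not_or] at hwuv
  obtain ⟨p, hp, hpu⟩ := hM hwv
  have hpne : p ≠ u ∧ p ≠ v := by
    constructor
    · rintro rfl
      have := (hM (M.edge_vert huv)).unique hp.symm huv
      exact hwuv.2 this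
    · rintro rfl
      have := (hM (M.edge_vert huv.symm)).unique hp.symm huv.symm
      exact hwuv.1 this
  refine ⟨p, ?_, ?_⟩
  · show (M.deleteVerts {u, v}).Adj w p
    rw [Subgraph.deleteVerts_adj]
    refine ⟨hwv, by simp [hwuv.1, hwuv.2], M.edge_vert hp.symm, by simp [hpne.1, hpne.2], hp⟩
  · intro z hz
    exact hpu z (Subgraph.deleteVerts_adj.mp hz).2.2.2.2

lemma aux_bad {V : Type*} [Fintype V] {H : SimpleGraph V} {M : H.Subgraph}
    (hM : M.IsMatching)
    (hmax : ∀ M' : H.Subgraph, M'.IsMatching → M'.verts.ncard ≤ M.verts.ncard)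
    {u v : V} (huv : M.Adj u v) :
    (H.neighborSet u \ M.verts).ncard ≤ 1 ∨ (H.neighborSet v \ M.verts).ncard ≤ 1 := by
  by_contra hc
  push_neg at hc
  obtain ⟨hu2, hv2⟩ := hc
  have huverts : u ∈ M.verts := M.edge_vert huv
  have hvverts : v ∈ M.verts := M.edge_vert huv.symm
  have hune : u ≠ v := huv.ne
  -- pick x neighbor of u outside
  obtain ⟨x, hx⟩ : (H.neighborSet u \ M.verts).Nonempty := by
    rw [← Set.ncard_pos (Set.toFinite _)]; omega
  obtain ⟨y1, y2, hy1, hy2, hy12⟩ := (Set.one_lt_ncard_iff (Set.toFinite _)).mp hv2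
  -- pick y ≠ x
  obtain ⟨y, hy, hyx⟩ : ∃ y, y ∈ H.neighborSet v \ M.verts ∧ y ≠ x := by
    by_cases h1 : y1 = x
    · exact ⟨y2, hy2, by rw [← h1]; exact fun hh => hy12 hh.symm⟩
    · exact ⟨y1, hy1, h1⟩
  have hux : H.Adj u x := hx.1
  have hvy : H.Adj v y := hy.1
  have hxW : x ∉ M.verts := hx.2
  have hyW : y ∉ M.verts := hy.2
  set A : Set V := M.verts \ {u, v} with hA
  have hdel := aux_del hM huv
  have hd1 : Disjoint (M.deleteVerts {u, v}).support (H.subgraphOfAdj hux).support := by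
    rw [hdel.support_eq_verts, Subgraph.deleteVerts_verts, SimpleGraph.support_subgraphOfAdj,
      Set.disjoint_right]
    rintro a (rfl | rfl) ha <;> simp_all
  have hm1 := hdel.sup (Subgraph.IsMatching.subgraphOfAdj hux) hd1
  have hd2 : Disjoint ((M.deleteVerts {u, v}) ⊔ H.subgraphOfAdj hux).support
      (H.subgraphOfAdj hvy).support := by
    refine Set.disjoint_of_subset_left (Subgraph.support_subset_verts _) ?_
    rw [Subgraph.verts_sup, Subgraph.deleteVerts_verts, SimpleGraph.subgraphOfAdj_verts,
      SimpleGraph.support_subgraphOfAdj, Set.disjoint_right]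
    have hvx : v ≠ x := fun h => hxW (h ▸ hvverts)
    have hyu : y ≠ u := fun h => hyW (h ▸ huverts)
    rintro a (rfl | rfl) ha
    · rcases ha with h | h
      · exact h.2 (by simp)
      · rcases h with rfl | rfl
        · exact hune rfl
        · exact hvx rfl
    · rcases ha with h | h
      · exact hyW h.1
      · rcases h with rfl | rfl
        · exact hyu rfl
        · exact hyx rfl
  have hm2 := hm1.sup (Subgraph.IsMatching.subgraphOfAdj hvy) hd2
  have hle := hmax _ hm2
  rw [Subgraph.verts_sup, Subgraph.verts_sup, Subgraph.deleteVerts_verts,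
    SimpleGraph.subgraphOfAdj_verts, SimpleGraph.subgraphOfAdj_verts] at hle
  have huvsub : ({u, v} : Set V) ⊆ M.verts := by
    rintro a (rfl | rfl) <;> assumption
  have hcardA : (M.verts \ ({u, v} : Set V)).ncard = M.verts.ncard - 2 := by
    rw [Set.ncard_diff huvsub (Set.toFinite _), Set.ncard_pair hune]
  have h2m : 2 ≤ M.verts.ncard := by
    have := Set.ncard_le_ncard huvsub (Set.toFinite _)
    rwa [Set.ncard_pair hune] at this
  have hux' : u ≠ x := fun h => hxW (h ▸ huverts)
  have hvy' : v ≠ y := fun h => hyW (h ▸ hvverts)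
  have hc1 : (M.verts \ {u, v} ∪ {u, x}).ncard = M.verts.ncard - 2 + 2 := by
    rw [Set.ncard_union_eq ?_ (Set.toFinite _) (Set.toFinite _), hcardA, Set.ncard_pair hux']
    rw [Set.disjoint_right]
    rintro a (rfl | rfl) ha
    · exact ha.2 (by simp)
    · exact hxW ha.1
  have hc2 : ((M.verts \ {u, v} ∪ {u, x}) ∪ {v, y}).ncard = M.verts.ncard - 2 + 2 + 2 := by
    rw [Set.ncard_union_eq ?_ (Set.toFinite _) (Set.toFinite _), hc1, Set.ncard_pair hvy']
    rw [Set.disjoint_right]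
    have hvx : v ≠ x := fun h => hxW (h ▸ hvverts)
    have hyu : y ≠ u := fun h => hyW (h ▸ huverts)
    rintro a (rfl | rfl) ha
    · rcases ha with h | h
      · exact h.2 (by simp)
      · rcases h with rfl | rfl
        · exact hune rfl
        · exact hvx rfl
    · rcases ha with h | h
      · exact hyW h.1
      · rcases h with rfl | rfl
        · exact hyu rfl
        · exact hyx rfl
  rw [hc2] at hle
  omega

open SimpleGraph

theorem maxMatching_edge_bound {V : Type*} [Fintype V] (H : SimpleGraph V) (n : ℕ)
    (hdeg : ∀ v : V, (H.neighborSet v).ncard < n)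
    (M : H.Subgraph) (hM : M.IsMatching)
    (hmax : ∀ M' : H.Subgraph, M'.IsMatching → M'.verts.ncard ≤ M.verts.ncard)
    (hsize : M.verts.ncard < n) :
    (H.edgeSet.ncard : ℝ) ≤ ((M.verts.ncard : ℝ) / 2) * ((n : ℝ) + (M.verts.ncard : ℝ) / 4) := by
  classical
  -- the partner function
  set f : V → V := fun v => if h : v ∈ M.verts then (hM h).choose else v with hfdef
  have hfa : ∀ v (h : v ∈ M.verts), M.Adj v (f v) := fun v h => by
    simp only [hfdef, dif_pos h]; exact (hM h).choose_spec.1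
  have hfu : ∀ v (h : v ∈ M.verts) (w : V), M.Adj v w → w = f v := fun v h w hw => by
    simp only [hfdef, dif_pos h]; exact (hM h).choose_spec.2 w hw
  have hfmem : ∀ v, v ∈ M.verts → f v ∈ M.verts := fun v h => M.edge_vert (hfa v h).symm
  have hff : ∀ v, v ∈ M.verts → f (f v) = v := fun v h =>
    (hfu (f v) (hfmem v h) v (hfa v h).symm).symm
  set Wf : Finset V := M.verts.toFinset with hWf
  set B : Finset V := Wf.filter (fun v => (H.neighborSet v \ M.verts).ncard ≤ 1) with hB
  set G : Finset V := Wf \ B with hG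
  have hmWf : M.verts.ncard = Wf.card := Set.ncard_eq_toFinset_card' _
  have hBW : B ⊆ Wf := Finset.filter_subset _ _
  have hbg : B.card + G.card = Wf.card := by
    rw [hG, Finset.card_sdiff_of_subset hBW]
    have := Finset.card_le_card hBW
    omega
  -- G injects into B via the partner map
  have hGB : ∀ v ∈ G, f v ∈ B := by
    intro v hv
    rw [hG, Finset.mem_sdiff] at hv
    have hvW : v ∈ M.verts := Set.mem_toFinset.mp hv.1
    have hPv : ¬ (H.neighborSet v \ M.verts).ncard ≤ 1 := by
      intro h; exact hv.2 (Finset.mem_filter.mpr ⟨hv.1, h⟩)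
    rw [hB, Finset.mem_filter]
    refine ⟨Set.mem_toFinset.mpr (hfmem v hvW), ?_⟩
    rcases aux_bad hM hmax (hfa v hvW) with h | h
    · exact absurd h hPv
    · exact h
  have hgb : G.card ≤ B.card := by
    refine Finset.card_le_card_of_injOn f hGB ?_
    intro a ha b hb hab
    replace ha : a ∈ Wf \ B := Finset.mem_coe.mp ha
    replace hb : b ∈ Wf \ B := Finset.mem_coe.mp hb
    rw [Finset.mem_sdiff] at ha hb
    have haW : a ∈ M.verts := Set.mem_toFinset.mp ha.1
    have hbW : b ∈ M.verts := Set.mem_toFinset.mp hb.1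
    calc a = f (f a) := (hff a haW).symm
    _ = f (f b) := by rw [hab]
    _ = b := hff b hbW
  -- edge counting
  have hedge : H.edgeSet.ncard = H.edgeFinset.card := by
    rw [Set.ncard_eq_toFinset_card']
    exact congrArg Finset.card (by ext; simp)
  set tG : Sym2 V → Prop := fun e => ∃ a ∈ e, a ∈ G with htG
  set aB : Sym2 V → Prop := fun e => ∀ a ∈ e, a ∈ B with haB
  set E1 : Finset (Sym2 V) := H.edgeFinset.filter tG with hE1
  set E2 : Finset (Sym2 V) := H.edgeFinset.filter (fun e => ¬ tG e) with hE2
  have hsplit : E1.card + E2.card = H.edgeFinset.card :=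
    Finset.card_filter_add_card_filter_not _
  set E2a : Finset (Sym2 V) := E2.filter aB with hE2a
  set E2b : Finset (Sym2 V) := E2.filter (fun e => ¬ aB e) with hE2b
  have hsplit2 : E2a.card + E2b.card = E2.card :=
    Finset.card_filter_add_card_filter_not _
  -- bound E1
  have hE1sub : E1 ⊆ G.biUnion (fun v => (H.neighborFinset v).image (fun w => s(v, w))) := by
    intro e he
    rw [hE1, Finset.mem_filter, mem_edgeFinset] at he
    obtain ⟨he1, a, hae, haG⟩ := he
    obtain ⟨b, rfl⟩ := Sym2.mem_iff_exists.mp hae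
    exact Finset.mem_biUnion.mpr ⟨a, haG,
      Finset.mem_image.mpr ⟨b, (H.mem_neighborFinset a b).mpr (H.mem_edgeSet.mp he1), rfl⟩⟩
  have hE1card : E1.card ≤ G.card * (n - 1) := by
    calc E1.card ≤ (G.biUnion (fun v => (H.neighborFinset v).image (fun w => s(v, w)))).card :=
          Finset.card_le_card hE1sub
    _ ≤ ∑ v ∈ G, ((H.neighborFinset v).image (fun w => s(v, w))).card :=
          Finset.card_biUnion_le
    _ ≤ ∑ v ∈ G, (n - 1) := by
          refine Finset.sum_le_sum fun v _ => ?_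
          have h1 : (H.neighborFinset v).card < n := by
            have := hdeg v
            rwa [Set.ncard_eq_toFinset_card', ← neighborFinset_def] at this
          calc ((H.neighborFinset v).image (fun w => s(v, w))).card
              ≤ (H.neighborFinset v).card := Finset.card_image_le
          _ ≤ n - 1 := by omega
    _ = G.card * (n - 1) := by rw [Finset.sum_const, smul_eq_mul]
  -- bound E2a
  have hE2acard : E2a.card ≤ B.card.choose 2 := by
    have hsub : E2a ⊆ B.offDiag.image Sym2.mk.uncurry := by
      intro e he
      rw [hE2a, Finset.mem_filter, hE2, Finset.mem_filter, mem_edgeFinset] at he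
      obtain ⟨⟨he1, -⟩, hall⟩ := he
      obtain ⟨⟨x, y⟩, rfl⟩ := Quot.exists_rep e
      have hxy : H.Adj x y := H.mem_edgeSet.mp he1
      refine Finset.mem_image.mpr ⟨(x, y), Finset.mem_offDiag.mpr
        ⟨hall x (Sym2.mem_mk_left x y), hall y (Sym2.mem_mk_right x y), hxy.ne⟩, rfl⟩
    calc E2a.card ≤ (B.offDiag.image Sym2.mk.uncurry).card := Finset.card_le_card hsub
    _ = B.card.choose 2 := Sym2.card_image_offDiag B
  -- bound E2b
  have hkey : ∀ x y : V, H.Adj x y → x ∉ G → y ∉ G → y ∉ B →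
      s(x, y) ∈ B.biUnion (fun v =>
        ((H.neighborFinset v).filter (fun w => w ∉ M.verts)).image (fun w => s(v, w))) := by
    intro x y hxy hxG hyG hyB
    have hyW : y ∉ M.verts := by
      intro hy
      have hyWf : y ∈ Wf := Set.mem_toFinset.mpr hy
      rcases Finset.mem_sdiff.mpr ⟨hyWf, hyB⟩ with h
      exact hyG h
    have hxW : x ∈ M.verts := (aux_meets hM hmax hxy).resolve_right hyW
    have hxB : x ∈ B := by
      by_contra hxB
      exact hxG (Finset.mem_sdiff.mpr ⟨Set.mem_toFinset.mpr hxW, hxB⟩)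
    exact Finset.mem_biUnion.mpr ⟨x, hxB, Finset.mem_image.mpr
      ⟨y, Finset.mem_filter.mpr ⟨(H.mem_neighborFinset x y).mpr hxy, hyW⟩, rfl⟩⟩
  have hE2bsub : E2b ⊆ B.biUnion (fun v =>
      ((H.neighborFinset v).filter (fun w => w ∉ M.verts)).image (fun w => s(v, w))) := by
    intro e he
    rw [hE2b, Finset.mem_filter, hE2, Finset.mem_filter, mem_edgeFinset] at he
    obtain ⟨⟨he1, hnt⟩, hnall⟩ := he
    obtain ⟨⟨x, y⟩, rfl⟩ := Quot.exists_rep e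
    have hxy : H.Adj x y := H.mem_edgeSet.mp he1
    have hxG : x ∉ G := fun h => hnt ⟨x, Sym2.mem_mk_left x y, h⟩
    have hyG : y ∉ G := fun h => hnt ⟨y, Sym2.mem_mk_right x y, h⟩
    simp only [haB, not_forall] at hnall
    obtain ⟨a, hae, haB'⟩ := hnall
    rcases Sym2.mem_iff.mp hae with rfl | rfl
    · show s(a, y) ∈ _
      rw [Sym2.eq_swap]
      exact hkey y a hxy.symm hyG hxG haB'
    · exact hkey x a hxy hxG hyG haB'
  have hE2bcard : E2b.card ≤ B.card := by
    calc E2b.card ≤ (B.biUnion (fun v =>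
        ((H.neighborFinset v).filter (fun w => w ∉ M.verts)).image (fun w => s(v, w)))).card :=
          Finset.card_le_card hE2bsub
    _ ≤ ∑ v ∈ B, (((H.neighborFinset v).filter (fun w => w ∉ M.verts)).image
          (fun w => s(v, w))).card := Finset.card_biUnion_le
    _ ≤ ∑ v ∈ B, 1 := by
          refine Finset.sum_le_sum fun v hv => ?_
          have hP : (H.neighborSet v \ M.verts).ncard ≤ 1 := (Finset.mem_filter.mp hv).2
          have heq : ((H.neighborFinset v).filter (fun w => w ∉ M.verts))
              = (H.neighborSet v \ M.verts).toFinset := by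
            ext w
            simp [mem_neighborFinset]
          calc (((H.neighborFinset v).filter (fun w => w ∉ M.verts)).image
                (fun w => s(v, w))).card
              ≤ ((H.neighborFinset v).filter (fun w => w ∉ M.verts)).card :=
                Finset.card_image_le
          _ ≤ 1 := by rw [heq]; rwa [Set.ncard_eq_toFinset_card'] at hP
    _ = B.card := by rw [Finset.sum_const, smul_eq_mul, mul_one]
  -- assemble
  have htotal : H.edgeSet.ncard ≤ G.card * (n - 1) + B.card.choose 2 + B.card := by
    rw [hedge]
    omega
  -- final arithmetic
  have hn1 : 1 ≤ n := by omega
  have hmn : M.verts.ncard + 1 ≤ n := hsize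
  set b := B.card
  set g := G.card
  have hmbg : M.verts.ncard = b + g := by omega
  have hreal : (H.edgeSet.ncard : ℝ) ≤ (g : ℝ) * ((n : ℝ) - 1) + (b : ℝ) * ((b : ℝ) - 1) / 2
      + (b : ℝ) := by
    have := htotal
    have hcast : ((G.card * (n - 1) + B.card.choose 2 + B.card : ℕ) : ℝ)
        = (g : ℝ) * ((n : ℝ) - 1) + (b : ℝ) * ((b : ℝ) - 1) / 2 + (b : ℝ) := by
      push_cast [Nat.cast_sub hn1, Nat.cast_choose_two]
      ring
    calc (H.edgeSet.ncard : ℝ) ≤ ((G.card * (n - 1) + B.card.choose 2 + B.card : ℕ) : ℝ) := by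
          exact_mod_cast this
    _ = _ := hcast
  rw [hmbg]
  have hgb' : (g : ℝ) ≤ (b : ℝ) := by exact_mod_cast hgb
  have hmn' : (b : ℝ) + (g : ℝ) + 1 ≤ (n : ℝ) := by
    rw [hmbg] at hmn; exact_mod_cast hmn
  have hg0 : (0 : ℝ) ≤ (g : ℝ) := Nat.cast_nonneg g
  push_cast
  nlinarith [mul_nonneg (sub_nonneg.mpr hgb') (sub_nonneg.mpr hmn'),
    mul_nonneg (sub_nonneg.mpr hgb') (by linarith : (0:ℝ) ≤ (b:ℝ) + 3 * (g:ℝ))]
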